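/- arXiv:1409.7857 — 2 statements merged into one kernel-verified Lean document; each statement's English description precedes it below -/
import Mathlib

section
/- Let Γ be a family of normal states on a von Neumann algebra M, and let φ and ω be two faithful normal states belonging to Γ such that φ commutes with ω. Then the von Neumann algebra generated by the Connes cocycles with respect to φ equals the one generated by the cocycles with respect to ω: W*({[Dρ:Dφ]_t : t ∈ ℝ, ρ ∈ Γ}) = W*({[Dρ:Dω]_t : t ∈ ℝ, ρ ∈ Γ}). Consequently, the definition of joint commutativity of Γ does not depend on the choice of the faithful state in Γ. -/
open Filter

noncomputable section

/-- A normal state on the algebra of bounded operators of a complex Hilbert space `H`,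
given by its standard representation `φ(x) = ∑ₙ ⟪ξₙ, x ξₙ⟫` with `∑ₙ ‖ξₙ‖² = 1`.
(Every normal state on a von Neumann algebra `M ⊆ B(H)` is the restriction to `M` of
such a functional.) -/
structure NormalState (H : Type*) [NormedAddCommGroup H] [InnerProductSpace ℂ H] where
  app : (H →L[ℂ] H) → ℂ
  normal : ∃ ξ : ℕ → H, (Summable fun n => ‖ξ n‖ ^ 2) ∧ (∑' n, ‖ξ n‖ ^ 2) = 1 ∧
      ∀ x : H →L[ℂ] H, app x = ∑' n, (inner ℂ (ξ n) (x (ξ n)) : ℂ)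

variable {H : Type*} [NormedAddCommGroup H] [InnerProductSpace ℂ H] [CompleteSpace H]

/-- A normal state is faithful on `M` if it does not vanish at nonzero positive
elements of `M`. -/
def NormalState.IsFaithful (φ : NormalState H) (M : VonNeumannAlgebra H) : Prop :=
  ∀ x : H →L[ℂ] H, x ∈ M → x.IsPositive → φ.app x = 0 → x = 0

/-- `p` is the support projection `s(φ)` of the normal state `φ` in `M`:
the smallest projection of `M` with `φ(1 - p) = 0`. -/
def IsSupportProjection (M : VonNeumannAlgebra H) (φ : NormalState H)
    (p : H →L[ℂ] H) : Prop :=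
  p ∈ M ∧ p * p = p ∧ star p = p ∧ φ.app (1 - p) = 0 ∧
    ∀ q : H →L[ℂ] H, q ∈ M → q * q = q → star q = q → φ.app (1 - q) = 0 → p * q = p

/-- The von Neumann algebra `W*(S)` generated by a set `S ⊆ B(H)`:
the double commutant of `S ∪ S*`. -/
def genVN (S : Set (H →L[ℂ] H)) : Set (H →L[ℂ] H) :=
  Set.centralizer (Set.centralizer (S ∪ star '' S))

/-- A set of operators generates an abelian von Neumann algebra. -/
def IsAbelianSet (S : Set (H →L[ℂ] H)) : Prop :=
  ∀ x ∈ S, ∀ y ∈ S, x * y = y * x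

/-- Modular theory data on a (σ-finite) von Neumann algebra `M ⊆ B(H)`:
for every faithful normal state `ω` the modular automorphism group
`mod ω t = σ_t^ω` (characterized by `ω`-invariance and the KMS condition), and for
every normal state `φ` and faithful normal state `ω` the Connes cocycles
`ccl φ ω t = [Dφ : Dω]_t`, with their standard properties (cocycle identity,
support relations, chain rule and inversion formula). -/
structure ModularTheory (H : Type*) [NormedAddCommGroup H] [InnerProductSpace ℂ H]
    [CompleteSpace H] (M : VonNeumannAlgebra H) where
  /-- the modular automorphism group `σ^ω` of a faithful normal state `ω` -/
  mod : NormalState H → ℝ → (H →L[ℂ] H) → (H →L[ℂ] H)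
  /-- the Connes cocycle `[Dφ : Dω]_t` -/
  ccl : NormalState H → NormalState H → ℝ → (H →L[ℂ] H)
  /-- the support projection `s(φ)` -/
  supp : NormalState H → (H →L[ℂ] H)
  supp_spec : ∀ φ : NormalState H, IsSupportProjection M φ (supp φ)
  mod_mem : ∀ ω : NormalState H, ω.IsFaithful M → ∀ t : ℝ, ∀ x ∈ M, mod ω t x ∈ M
  mod_linear : ∀ ω : NormalState H, ω.IsFaithful M → ∀ t : ℝ, IsLinearMap ℂ (mod ω t)
  mod_mul : ∀ ω : NormalState H, ω.IsFaithful M → ∀ (t : ℝ) (x y : H →L[ℂ] H),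
    mod ω t (x * y) = mod ω t x * mod ω t y
  mod_star : ∀ ω : NormalState H, ω.IsFaithful M → ∀ (t : ℝ) (x : H →L[ℂ] H),
    mod ω t (star x) = star (mod ω t x)
  mod_add : ∀ ω : NormalState H, ω.IsFaithful M → ∀ (s t : ℝ) (x : H →L[ℂ] H),
    mod ω (s + t) x = mod ω s (mod ω t x)
  mod_zero : ∀ ω : NormalState H, ω.IsFaithful M → ∀ x : H →L[ℂ] H, mod ω 0 x = x
  mod_invariant : ∀ ω : NormalState H, ω.IsFaithful M → ∀ (t : ℝ) (x : H →L[ℂ] H),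
    ω.app (mod ω t x) = ω.app x
  mod_cont : ∀ ω : NormalState H, ω.IsFaithful M → ∀ (x : H →L[ℂ] H) (ξ η : H),
    Continuous fun t : ℝ => (inner ℂ ξ (mod ω t x η) : ℂ)
  mod_kms : ∀ ω : NormalState H, ω.IsFaithful M → ∀ x ∈ M, ∀ y ∈ M, ∃ F : ℂ → ℂ,
    ContinuousOn F {z : ℂ | 0 ≤ z.im ∧ z.im ≤ 1} ∧
    DifferentiableOn ℂ F {z : ℂ | 0 < z.im ∧ z.im < 1} ∧
    (∀ t : ℝ, F t = ω.app (mod ω t x * y)) ∧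
    (∀ t : ℝ, F (t + Complex.I) = ω.app (y * mod ω t x))
  ccl_mem : ∀ φ ω : NormalState H, ω.IsFaithful M → ∀ t : ℝ, ccl φ ω t ∈ M
  ccl_cocycle : ∀ φ ω : NormalState H, ω.IsFaithful M → ∀ s t : ℝ,
    ccl φ ω (t + s) = ccl φ ω t * mod ω t (ccl φ ω s)
  ccl_zero : ∀ φ ω : NormalState H, ω.IsFaithful M → ccl φ ω 0 = supp φ
  ccl_mul_star : ∀ φ ω : NormalState H, ω.IsFaithful M → ∀ t : ℝ,
    ccl φ ω t * star (ccl φ ω t) = supp φ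
  ccl_star_mul : ∀ φ ω : NormalState H, ω.IsFaithful M → ∀ t : ℝ,
    star (ccl φ ω t) * ccl φ ω t = mod ω t (supp φ)
  ccl_chain : ∀ ρ φ ω : NormalState H, φ.IsFaithful M → ω.IsFaithful M → ∀ t : ℝ,
    ccl ρ φ t = ccl ρ ω t * ccl ω φ t
  ccl_inv : ∀ φ ω : NormalState H, φ.IsFaithful M → ω.IsFaithful M → ∀ t : ℝ,
    ccl ω φ t = star (ccl φ ω t)
  ccl_cont : ∀ φ ω : NormalState H, ω.IsFaithful M → ∀ ξ η : H,
    Continuous fun t : ℝ => (inner ℂ ξ (ccl φ ω t η) : ℂ)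

/-- A normal state `φ` commutes with the faithful normal state `ω` (relative to the
modular data `T`) if `φ ∘ σ_t^ω = φ` on `M` for all `t ∈ ℝ`. -/
def CommutesWith (M : VonNeumannAlgebra H) (T : ModularTheory H M)
    (φ ω : NormalState H) : Prop :=
  ∀ t : ℝ, ∀ x ∈ M, φ.app (T.mod ω t x) = φ.app x

/-- The set of all Connes cocycles `[Dρ : Dω]_t`, `t ∈ ℝ`, `ρ ∈ Γ`. -/
def cocycleSet (M : VonNeumannAlgebra H) (T : ModularTheory H M)
    (Γ : Set (NormalState H)) (ω : NormalState H) : Set (H →L[ℂ] H) :=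
  {u | ∃ ρ ∈ Γ, ∃ t : ℝ, u = T.ccl ρ ω t}


section Aux

variable {H : Type*} [NormedAddCommGroup H] [InnerProductSpace ℂ H] [CompleteSpace H]

lemma aux_star_mem_centralizer {S : Set (H →L[ℂ] H)} (hS : ∀ s ∈ S, star s ∈ S)
    {a : H →L[ℂ] H} (ha : a ∈ Set.centralizer S) : star a ∈ Set.centralizer S := by
  intro m hm
  have h := ha (star m) (hS m hm)
  calc m * star a = star (a * star m) := by simp
    _ = star (star m * a) := by rw [h]
    _ = star a * m := by simp

lemma aux_starClosed_union (S : Set (H →L[ℂ] H)) :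
    ∀ s ∈ S ∪ star '' S, star s ∈ S ∪ star '' S := by
  rintro s (hs | ⟨x, hx, rfl⟩)
  · exact Or.inr ⟨s, hs, rfl⟩
  · simpa using Or.inl hx

lemma subset_genVN (S : Set (H →L[ℂ] H)) : S ⊆ genVN S :=
  fun x hx => Set.subset_centralizer_centralizer (Or.inl hx)

lemma star_mem_genVN {S : Set (H →L[ℂ] H)} {a : H →L[ℂ] H} (ha : a ∈ genVN S) :
    star a ∈ genVN S :=
  aux_star_mem_centralizer
    (fun _ hs => aux_star_mem_centralizer (aux_starClosed_union S) hs) ha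

lemma mul_mem_genVN {S : Set (H →L[ℂ] H)} {a b : H →L[ℂ] H}
    (ha : a ∈ genVN S) (hb : b ∈ genVN S) : a * b ∈ genVN S :=
  Set.mul_mem_centralizer ha hb

lemma genVN_le {S T : Set (H →L[ℂ] H)} (h : S ⊆ genVN T) : genVN S ⊆ genVN T := by
  have h1 : S ∪ star '' S ⊆ genVN T := by
    rintro s (hs | ⟨x, hx, rfl⟩)
    · exact h hs
    · exact star_mem_genVN (h hx)
  have h2 : Set.centralizer (Set.centralizer (Set.centralizer (T ∪ star '' T)))
      ⊆ Set.centralizer (S ∪ star '' S) := Set.centralizer_subset h1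
  rw [Set.centralizer_centralizer_centralizer] at h2
  exact Set.centralizer_subset h2

end Aux

/-- Let `Γ` be a family of normal states on `M` and let `φ, ω ∈ Γ` be two
faithful normal states such that `φ` commutes with `ω`.  Then the von Neumann algebra
generated by the Connes cocycles taken with respect to `φ` coincides with the one generated
by the cocycles taken with respect to `ω`:
`W*({[Dρ:Dφ]_t : t ∈ ℝ, ρ ∈ Γ}) = W*({[Dρ:Dω]_t : t ∈ ℝ, ρ ∈ Γ})`.
Consequently the definition of joint commutativity of `Γ` does not depend on the choice of
the faithful state in `Γ`. -/
theorem genVN_cocycles_independent_of_faithful_state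
    {H : Type*} [NormedAddCommGroup H] [InnerProductSpace ℂ H] [CompleteSpace H]
    (M : VonNeumannAlgebra H) (T : ModularTheory H M)
    (Γ : Set (NormalState H)) (φ ω : NormalState H)
    (hφΓ : φ ∈ Γ) (hωΓ : ω ∈ Γ)
    (hφ : φ.IsFaithful M) (hω : ω.IsFaithful M)
    (hcomm : CommutesWith M T φ ω) :
    genVN (cocycleSet M T Γ φ) = genVN (cocycleSet M T Γ ω) := by
  have key : ∀ (α β : NormalState H), α ∈ Γ → α.IsFaithful M → β.IsFaithful M →
      cocycleSet M T Γ α ⊆ genVN (cocycleSet M T Γ β) := by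
    intro α β hαΓ hα hβ
    rintro u ⟨ρ, hρ, t, rfl⟩
    rw [T.ccl_chain ρ α β hα hβ t, T.ccl_inv α β hα hβ t]
    exact mul_mem_genVN (subset_genVN _ ⟨ρ, hρ, t, rfl⟩)
      (star_mem_genVN (subset_genVN _ ⟨α, hαΓ, t, rfl⟩))
  exact Set.Subset.antisymm (genVN_le (key φ ω hφΓ hφ hω)) (genVN_le (key ω φ hωΓ hω hφ))
end
end

section
/- Let ω be a faithful normal state on a von Neumann algebra M and let A be a positive selfadjoint operator affiliated with the centralizer M^ω. Then for every x ∈ M one has ω_A((1+A)^{-1/2} x (1+A)^{-1/2}) = ω(A(1+A)^{-1} x), where ω_A is the normal weight defined by ω_A(x) = lim_{ε→0} ω_{A(1+εA)^{-1}}(x). -/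
open Filter

noncomputable section

variable {H : Type*} [NormedAddCommGroup H] [InnerProductSpace ℂ H] [CompleteSpace H]

section AuxLemmas

private lemma aux_summable {ξ : ℕ → H} (hs : Summable fun n => ‖ξ n‖ ^ 2)
    (x : H →L[ℂ] H) : Summable fun n => (inner ℂ (ξ n) (x (ξ n)) : ℂ) := by
  refine Summable.of_norm_bounded (hs.mul_left ‖x‖) fun n => ?_
  calc ‖(inner ℂ (ξ n) (x (ξ n)) : ℂ)‖ ≤ ‖ξ n‖ * ‖x (ξ n)‖ := norm_inner_le_norm _ _
    _ ≤ ‖ξ n‖ * (‖x‖ * ‖ξ n‖) := by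
        have h := x.le_opNorm (ξ n)
        have h2 := norm_nonneg (ξ n)
        nlinarith
    _ = ‖x‖ * ‖ξ n‖ ^ 2 := by ring

private lemma aux_app_add (ω : NormalState H) {ξ : ℕ → H}
    (hs : Summable fun n => ‖ξ n‖ ^ 2)
    (hrep : ∀ x, ω.app x = ∑' n, (inner ℂ (ξ n) (x (ξ n)) : ℂ))
    (a b : H →L[ℂ] H) : ω.app (a + b) = ω.app a + ω.app b := by
  rw [hrep, hrep, hrep, ← Summable.tsum_add (aux_summable hs a) (aux_summable hs b)]
  congr 1
  ext n
  simp [inner_add_right]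

private lemma aux_app_sub (ω : NormalState H) {ξ : ℕ → H}
    (hs : Summable fun n => ‖ξ n‖ ^ 2)
    (hrep : ∀ x, ω.app x = ∑' n, (inner ℂ (ξ n) (x (ξ n)) : ℂ))
    (a b : H →L[ℂ] H) : ω.app (a - b) = ω.app a - ω.app b := by
  rw [hrep, hrep, hrep, ← Summable.tsum_sub (aux_summable hs a) (aux_summable hs b)]
  congr 1
  ext n
  simp [inner_sub_right]

private lemma aux_app_real_smul (ω : NormalState H) {ξ : ℕ → H}
    (hrep : ∀ x, ω.app x = ∑' n, (inner ℂ (ξ n) (x (ξ n)) : ℂ))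
    (r : ℝ) (a : H →L[ℂ] H) : ω.app (r • a) = (r : ℂ) * ω.app a := by
  rw [hrep, hrep, ← tsum_mul_left]
  congr 1
  ext n
  rw [ContinuousLinearMap.smul_apply,
    show r • (a (ξ n)) = (r : ℂ) • (a (ξ n)) from RCLike.real_smul_eq_coe_smul (K := ℂ) r _,
    inner_smul_right]

private lemma aux_app_norm_le (ω : NormalState H) {ξ : ℕ → H}
    (hs : Summable fun n => ‖ξ n‖ ^ 2) (h1 : (∑' n, ‖ξ n‖ ^ 2) = 1)
    (hrep : ∀ x, ω.app x = ∑' n, (inner ℂ (ξ n) (x (ξ n)) : ℂ))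
    (a : H →L[ℂ] H) : ‖ω.app a‖ ≤ ‖a‖ := by
  have hbound : ∀ n, ‖(inner ℂ (ξ n) (a (ξ n)) : ℂ)‖ ≤ ‖a‖ * ‖ξ n‖ ^ 2 := by
    intro n
    calc ‖(inner ℂ (ξ n) (a (ξ n)) : ℂ)‖ ≤ ‖ξ n‖ * ‖a (ξ n)‖ := norm_inner_le_norm _ _
      _ ≤ ‖ξ n‖ * (‖a‖ * ‖ξ n‖) := by
          have h := a.le_opNorm (ξ n)
          have h2 := norm_nonneg (ξ n)
          nlinarith
      _ = ‖a‖ * ‖ξ n‖ ^ 2 := by ring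
  have hsum : Summable fun n => ‖(inner ℂ (ξ n) (a (ξ n)) : ℂ)‖ :=
    Summable.of_nonneg_of_le (fun n => norm_nonneg _) hbound (hs.mul_left ‖a‖)
  rw [hrep]
  calc ‖∑' n, (inner ℂ (ξ n) (a (ξ n)) : ℂ)‖ ≤ ∑' n, ‖(inner ℂ (ξ n) (a (ξ n)) : ℂ)‖ :=
        norm_tsum_le_tsum_norm hsum
    _ ≤ ∑' n, ‖a‖ * ‖ξ n‖ ^ 2 := Summable.tsum_le_tsum hbound hsum (hs.mul_left ‖a‖)
    _ = ‖a‖ * ∑' n, ‖ξ n‖ ^ 2 := tsum_mul_left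
    _ = ‖a‖ := by rw [h1, mul_one]

private lemma aux_app_continuous (ω : NormalState H) {ξ : ℕ → H}
    (hs : Summable fun n => ‖ξ n‖ ^ 2) (h1 : (∑' n, ‖ξ n‖ ^ 2) = 1)
    (hrep : ∀ x, ω.app x = ∑' n, (inner ℂ (ξ n) (x (ξ n)) : ℂ)) :
    Continuous ω.app := by
  refine (LipschitzWith.of_dist_le_mul fun a b => ?_).continuous (K := 1)
  rw [dist_eq_norm, dist_eq_norm, ← aux_app_sub ω hs hrep, NNReal.coe_one, one_mul]
  exact aux_app_norm_le ω hs h1 hrep _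

private lemma aux_vN_isClosed (M : VonNeumannAlgebra H) :
    IsClosed (M : Set (H →L[ℂ] H)) := by
  rw [← M.centralizer_centralizer]
  have : Set.centralizer (Set.centralizer (M : Set (H →L[ℂ] H)))
      = ⋂ y ∈ Set.centralizer (M : Set (H →L[ℂ] H)), {a | y * a - a * y = 0} := by
    ext a
    simp only [Set.mem_centralizer_iff, Set.mem_iInter, Set.mem_setOf_eq, sub_eq_zero]
  rw [this]
  refine isClosed_biInter fun y _ => ?_
  have hcont : Continuous fun a : H →L[ℂ] H => y * a - a * y :=
    (continuous_const.mul continuous_id).sub (continuous_id.mul continuous_const)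
  exact isClosed_eq hcont continuous_const

/-- Extension of the centralizer property from `c` to continuous functions of `c`. -/
private lemma aux_central_ext (M : VonNeumannAlgebra H) (ω : NormalState H)
    {ξ : ℕ → H} (hs : Summable fun n => ‖ξ n‖ ^ 2) (h1 : (∑' n, ‖ξ n‖ ^ 2) = 1)
    (hrep : ∀ x, ω.app x = ∑' n, (inner ℂ (ξ n) (x (ξ n)) : ℂ))
    {c : H →L[ℂ] H} (hcM : c ∈ M) (hcsa : IsSelfAdjoint c)
    (hspec : spectrum ℝ c ⊆ Set.Icc (0:ℝ) 1)
    (hccent : ∀ y ∈ M, ω.app (c * y) = ω.app (y * c))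
    (f : ℝ → ℝ) (hf : ContinuousOn f (Set.Icc (0:ℝ) 1)) :
    cfc f c ∈ M ∧ ∀ y ∈ M, ω.app (cfc f c * y) = ω.app (y * cfc f c) := by
  have ωcont : Continuous ω.app := aux_app_continuous ω hs h1 hrep
  -- the set of elements of `M` commuting with `ω`
  set S : Set (H →L[ℂ] H) :=
    {a | a ∈ M ∧ ∀ y ∈ M, ω.app (a * y) = ω.app (y * a)} with hSdef
  have hSclosed : IsClosed S := by
    have : S = (M : Set (H →L[ℂ] H)) ∩
        ⋂ y ∈ (M : Set (H →L[ℂ] H)), {a | ω.app (a * y) = ω.app (y * a)} := by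
      ext a
      simp only [hSdef, Set.mem_setOf_eq, Set.mem_inter_iff, Set.mem_iInter, SetLike.mem_coe]
    rw [this]
    refine (aux_vN_isClosed M).inter (isClosed_biInter fun y _ => ?_)
    exact isClosed_eq (ωcont.comp (continuous_mul_right y))
      (ωcont.comp (continuous_mul_left y))
  -- powers of `c` belong to `S`
  have hpow : ∀ n : ℕ, c ^ n ∈ S := by
    intro n
    induction n with
    | zero =>
      refine ⟨by simpa using one_mem M.toStarSubalgebra, fun y _ => by simp⟩
    | succ n ih =>
      constructor
      · rw [pow_succ]
        exact mul_mem ih.1 hcM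
      · intro y hy
        rw [pow_succ]
        calc ω.app (c ^ n * c * y) = ω.app (c ^ n * (c * y)) := by rw [mul_assoc]
          _ = ω.app ((c * y) * c ^ n) := ih.2 _ (mul_mem hcM hy)
          _ = ω.app (c * (y * c ^ n)) := by rw [mul_assoc]
          _ = ω.app ((y * c ^ n) * c) := hccent _ (mul_mem hy ih.1)
          _ = ω.app (y * (c ^ n * c)) := by rw [mul_assoc]
  -- real polynomials of `c` belong to `S`
  have hpoly : ∀ p : Polynomial ℝ, (Polynomial.aeval c) p ∈ S := by
    intro p
    induction p using Polynomial.induction_on' with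
    | add p q hp hq =>
      rw [map_add]
      refine ⟨add_mem hp.1 hq.1, fun y hy => ?_⟩
      rw [add_mul, mul_add, aux_app_add ω hs hrep, aux_app_add ω hs hrep,
        hp.2 y hy, hq.2 y hy]
    | monomial n r =>
      have heq : (Polynomial.aeval c) (Polynomial.monomial n r) = r • c ^ n := by
        rw [Polynomial.aeval_monomial, Algebra.algebraMap_eq_smul_one, smul_mul_assoc,
          one_mul]
      rw [heq]
      constructor
      · have hmem : ((r : ℂ)) • c ^ n ∈ M.toStarSubalgebra :=
          M.toStarSubalgebra.smul_mem (hpow n).1 _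
        rw [show r • c ^ n = ((r : ℂ)) • c ^ n from
          RCLike.real_smul_eq_coe_smul (K := ℂ) r (c ^ n)]
        exact hmem
      · intro y hy
        rw [smul_mul_assoc, mul_smul_comm, aux_app_real_smul ω hrep,
          aux_app_real_smul ω hrep, (hpow n).2 y hy]
  -- `cfc f c` is a norm limit of polynomials in `c`
  have hmem_closure : cfc f c ∈ closure {a | ∃ p : Polynomial ℝ, a = (Polynomial.aeval c) p} := by
    rw [Metric.mem_closure_iff]
    intro δ hδ
    set F : C(Set.Icc (0:ℝ) 1, ℝ) := ⟨_, hf.restrict⟩ with hFdef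
    have hF : F ∈ (polynomialFunctions (Set.Icc (0:ℝ) 1)).topologicalClosure := by
      rw [polynomialFunctions_closure_eq_top (0:ℝ) 1]
      trivial
    have hF' : F ∈ closure (polynomialFunctions (Set.Icc (0:ℝ) 1) :
        Set C(Set.Icc (0:ℝ) 1, ℝ)) := hF
    obtain ⟨g, hgmem, hdist⟩ := Metric.mem_closure_iff.mp hF' (δ/2) (by positivity)
    rw [polynomialFunctions_coe] at hgmem
    obtain ⟨p, rfl⟩ := hgmem
    refine ⟨(Polynomial.aeval c) p, ⟨p, rfl⟩, ?_⟩
    have hfc : ContinuousOn f (spectrum ℝ c) := hf.mono hspec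
    have hpc : ContinuousOn p.eval (spectrum ℝ c) := p.continuous_aeval.continuousOn
    rw [← cfc_polynomial p c, dist_eq_norm, ← cfc_sub (fun l => f l) p.eval c hfc hpc]
    refine lt_of_le_of_lt (norm_cfc_le (le_of_lt (by positivity)) fun l hl => ?_)
      (by linarith : δ/2 < δ)
    have hl' : l ∈ Set.Icc (0:ℝ) 1 := hspec hl
    have := hdist
    rw [dist_eq_norm] at this
    have hle := ContinuousMap.norm_coe_le_norm
      (F - Polynomial.toContinuousMapOnAlgHom (Set.Icc (0:ℝ) 1) p) ⟨l, hl'⟩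
    have happ : (F - Polynomial.toContinuousMapOnAlgHom (Set.Icc (0:ℝ) 1) p) ⟨l, hl'⟩
        = f l - p.eval l := by
      simp [hFdef, Polynomial.toContinuousMapOnAlgHom_apply, Polynomial.toContinuousMapOn_apply]
    rw [happ] at hle
    calc ‖f l - p.eval l‖ ≤ ‖F - Polynomial.toContinuousMapOnAlgHom (Set.Icc (0:ℝ) 1) p‖ := hle
      _ ≤ δ/2 := le_of_lt this
  have hsub : {a | ∃ p : Polynomial ℝ, a = (Polynomial.aeval c) p} ⊆ S := by
    rintro a ⟨p, rfl⟩
    exact hpoly p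
  have := closure_minimal hsub hSclosed hmem_closure
  exact this

/-- Density of the range of an injective positive operator. -/
private lemma aux_dense {c : H →L[ℂ] H} (hcsa : IsSelfAdjoint c)
    (hcinj : ∀ ξ : H, c ξ = 0 → ξ = 0) (v : H) {δ : ℝ} (hδ : 0 < δ) :
    ∃ w : H, ‖v - c w‖ < δ := by
  set K : Submodule ℂ H := LinearMap.range (c : H →ₗ[ℂ] H) with hK
  have hadj : ContinuousLinearMap.adjoint c = c := by
    rw [← ContinuousLinearMap.star_eq_adjoint]; exact hcsa
  have hKbot : Kᗮ = ⊥ := by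
    rw [Submodule.eq_bot_iff]
    intro u hu
    have h0 : ∀ w : H, (inner ℂ (c w) u : ℂ) = 0 := fun w =>
      (Submodule.mem_orthogonal K u).mp hu _ ⟨w, rfl⟩
    have h1 : (inner ℂ (c u) (c u) : ℂ) = 0 := by
      have h2 := ContinuousLinearMap.adjoint_inner_left c u (c u)
      rw [hadj] at h2
      rw [← h2]
      exact h0 (c u)
    exact hcinj u (inner_self_eq_zero.mp h1)
  have htop : K.topologicalClosure = ⊤ := Submodule.topologicalClosure_eq_top_iff.mpr hKbot
  have hvmem : v ∈ closure (K : Set H) := by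
    have : v ∈ (K.topologicalClosure : Set H) := by rw [htop]; trivial
    rwa [Submodule.topologicalClosure_coe] at this
  obtain ⟨u, hu, hdu⟩ := Metric.mem_closure_iff.mp hvmem δ hδ
  obtain ⟨w, rfl⟩ := hu
  rw [dist_eq_norm] at hdu
  exact ⟨w, hdu⟩

end AuxLemmas

open Pointwise

set_option maxHeartbeats 1600000


/-- Let `ω` be a faithful normal state on `M` and let `A` be a positive
selfadjoint operator affiliated with the centralizer
`M^ω = {x ∈ M : ω(xy) = ω(yx) for all y ∈ M}`; `A` is encoded by its bounded resolvent
`c = (1+A)⁻¹ ∈ M^ω` (a positive injective contraction), so that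
`(1+A)^{-1/2} = √c`, `A(1+A)⁻¹ = 1-c` and `A(1+εA)⁻¹ = f_ε(c)` with
`f_ε(l) = (1-l)/(l+ε(1-l))`.  Then for every `x ∈ M`,
`ω_A((1+A)^{-1/2} x (1+A)^{-1/2}) = ω(A(1+A)⁻¹ x)`, where
`ω_A(y) = lim_{ε→0⁺} ω_{A(1+εA)⁻¹}(y)` and `ω_a(y) = ω(a^{1/2} y a^{1/2})`; i.e. the
defining limit exists and has the stated value. -/
theorem omega_A_resolvent_formula
    {H : Type*} [NormedAddCommGroup H] [InnerProductSpace ℂ H] [CompleteSpace H]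
    (M : VonNeumannAlgebra H) (ω : NormalState H) (hω : ω.IsFaithful M)
    (c : H →L[ℂ] H) (hcM : c ∈ M) (hcpos : c.IsPositive)
    (hcle : ((1 : H →L[ℂ] H) - c).IsPositive)
    (hcinj : ∀ ξ : H, c ξ = 0 → ξ = 0)
    (hccent : ∀ y ∈ M, ω.app (c * y) = ω.app (y * c)) :
    ∀ x ∈ M, Filter.Tendsto (fun ε : ℝ =>
        ω.app (cfc (fun l : ℝ => Real.sqrt ((1 - l) / (l + ε * (1 - l)))) c *
          (cfc Real.sqrt c * x * cfc Real.sqrt c) *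
          cfc (fun l : ℝ => Real.sqrt ((1 - l) / (l + ε * (1 - l)))) c))
      (nhdsWithin 0 (Set.Ioi 0)) (nhds (ω.app (((1 : H →L[ℂ] H) - c) * x))) := by
  intro x hxM
  obtain ⟨ξ, hs, h1, hrep⟩ := ω.normal
  have hcsa : IsSelfAdjoint c := hcpos.isSelfAdjoint
  have hc0 : (0 : H →L[ℂ] H) ≤ c := (ContinuousLinearMap.nonneg_iff_isPositive c).mpr hcpos
  have hc1 : (0 : H →L[ℂ] H) ≤ 1 - c := (ContinuousLinearMap.nonneg_iff_isPositive _).mpr hcle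
  have hspec : spectrum ℝ c ⊆ Set.Icc (0:ℝ) 1 := by
    intro l hl
    refine ⟨spectrum_nonneg_of_nonneg hc0 hl, ?_⟩
    have hmem : (1:ℝ) - l ∈ ({(1:ℝ)} - spectrum ℝ c) :=
      Set.sub_mem_sub rfl hl
    rw [spectrum.singleton_sub_eq] at hmem
    have halg : (algebraMap ℝ (H →L[ℂ] H)) 1 - c = 1 - c := by rw [map_one]
    rw [halg] at hmem
    have := spectrum_nonneg_of_nonneg hc1 hmem
    linarith
  have hden : ∀ ε : ℝ, 0 < ε → ∀ l ∈ Set.Icc (0:ℝ) 1, 0 < l + ε * (1 - l) := by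
    intro ε hε l hl
    rcases eq_or_lt_of_le hl.1 with h | h
    · rw [← h]; simpa using hε
    · have h2 : 0 ≤ ε * (1 - l) := mul_nonneg hε.le (by linarith [hl.2])
      linarith
  have hgcont : ∀ ε : ℝ, 0 < ε →
      ContinuousOn (fun l : ℝ => (1 - l) / (l + ε * (1 - l))) (Set.Icc (0:ℝ) 1) :=
    fun ε hε => ContinuousOn.div (by fun_prop) (by fun_prop)
      (fun l hl => (hden ε hε l hl).ne')
  have hqcont : ∀ ε : ℝ, 0 < ε →
      ContinuousOn (fun l : ℝ => l * (1 - l) / (l + ε * (1 - l))) (Set.Icc (0:ℝ) 1) :=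
    fun ε hε => ContinuousOn.div (by fun_prop) (by fun_prop)
      (fun l hl => (hden ε hε l hl).ne')
  have hddcont : ∀ ε : ℝ, 0 < ε →
      ContinuousOn (fun l : ℝ => (1 - l) - l * (1 - l) / (l + ε * (1 - l)))
        (Set.Icc (0:ℝ) 1) :=
    fun ε hε => ContinuousOn.sub (by fun_prop) (hqcont ε hε)
  have hext : ∀ f : ℝ → ℝ, ContinuousOn f (Set.Icc (0:ℝ) 1) →
      cfc f c ∈ M ∧ ∀ y ∈ M, ω.app (cfc f c * y) = ω.app (y * cfc f c) :=
    fun f hf => aux_central_ext M ω hs h1 hrep hcM hcsa hspec hccent f hf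
  have hS := hext Real.sqrt Real.continuous_sqrt.continuousOn
  have hss : ContinuousOn Real.sqrt (spectrum ℝ c) := Real.continuous_sqrt.continuousOn
  -- the key algebraic identity for each fixed ε > 0
  have key : ∀ ε : ℝ, 0 < ε →
      ω.app (cfc (fun l : ℝ => Real.sqrt ((1 - l) / (l + ε * (1 - l)))) c *
        (cfc Real.sqrt c * x * cfc Real.sqrt c) *
        cfc (fun l : ℝ => Real.sqrt ((1 - l) / (l + ε * (1 - l)))) c)
      = ω.app (((1 : H →L[ℂ] H) - c) * x)
        - ω.app (cfc (fun l : ℝ => (1 - l) - l * (1 - l) / (l + ε * (1 - l))) c * x) := by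
    intro ε hε
    have hgc : ContinuousOn (fun l : ℝ => Real.sqrt ((1 - l) / (l + ε * (1 - l))))
        (Set.Icc (0:ℝ) 1) := Real.continuous_sqrt.comp_continuousOn (hgcont ε hε)
    have hG := hext _ hgc
    have hQ := hext _ (hqcont ε hε)
    set g : ℝ → ℝ := fun l : ℝ => Real.sqrt ((1 - l) / (l + ε * (1 - l))) with hgdef
    set S := cfc Real.sqrt c with hSdef
    set G := cfc g c with hGdef
    have hgs : ContinuousOn g (spectrum ℝ c) := hgc.mono hspec
    have hrs : ContinuousOn (fun l : ℝ => (1 - l) / (l + ε * (1 - l))) (spectrum ℝ c) :=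
      (hgcont ε hε).mono hspec
    have hqs : ContinuousOn (fun l : ℝ => l * (1 - l) / (l + ε * (1 - l)))
        (spectrum ℝ c) := (hqcont ε hε).mono hspec
    have e2 : G * G = cfc (fun l : ℝ => (1 - l) / (l + ε * (1 - l))) c := by
      rw [hGdef, ← cfc_mul g g c hgs hgs]
      refine cfc_congr fun l hl => ?_
      have hl' := hspec hl
      exact Real.mul_self_sqrt (div_nonneg (by linarith [hl'.2]) (hden ε hε l hl').le)
    have e3 : S * (G * G) =
        cfc (fun l : ℝ => Real.sqrt l * ((1 - l) / (l + ε * (1 - l)))) c := by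
      rw [e2, hSdef, ← cfc_mul _ _ c hss hrs]
    have hc2 : ContinuousOn (fun l : ℝ => Real.sqrt l * ((1 - l) / (l + ε * (1 - l))))
        (spectrum ℝ c) := hss.mul hrs
    have e4 : S * (G * G) * S =
        cfc (fun l : ℝ => l * (1 - l) / (l + ε * (1 - l))) c := by
      rw [e3, hSdef, ← cfc_mul _ _ c hc2 hss]
      refine cfc_congr fun l hl => ?_
      have hl' := hspec hl
      have h0 : Real.sqrt l * Real.sqrt l = l := Real.mul_self_sqrt hl'.1
      have hre : Real.sqrt l * ((1 - l) / (l + ε * (1 - l))) * Real.sqrt l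
          = Real.sqrt l * Real.sqrt l * ((1 - l) / (l + ε * (1 - l))) := by ring
      rw [hre, h0]
      ring
    have e1 : ω.app (G * (S * x * S) * G) = ω.app (S * x * S * G * G) := by
      rw [mul_assoc]
      exact hG.2 _ (mul_mem (mul_mem (mul_mem hS.1 hxM) hS.1) hG.1)
    have ea1 : S * x * S * G * G = S * (x * (S * (G * G))) := by
      simp only [mul_assoc]
    have e6 : ω.app (S * (x * (S * (G * G)))) = ω.app ((x * (S * (G * G))) * S) :=
      hS.2 _ (mul_mem hxM (mul_mem hS.1 (mul_mem hG.1 hG.1)))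
    have ea2 : (x * (S * (G * G))) * S = x * (S * (G * G) * S) := by
      simp only [mul_assoc]
    have e7 : ω.app (x * (cfc (fun l : ℝ => l * (1 - l) / (l + ε * (1 - l))) c))
        = ω.app ((cfc (fun l : ℝ => l * (1 - l) / (l + ε * (1 - l))) c) * x) :=
      (hQ.2 x hxM).symm
    have echain : ω.app (G * (S * x * S) * G)
        = ω.app ((cfc (fun l : ℝ => l * (1 - l) / (l + ε * (1 - l))) c) * x) := by
      rw [e1, ea1, e6, ea2, e4, e7]
    have hone : cfc (fun l : ℝ => 1 - l) c = 1 - c := by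
      rw [cfc_sub (fun _ : ℝ => (1:ℝ)) (fun l : ℝ => l) c continuousOn_const
        continuous_id.continuousOn, cfc_const_one ℝ c, cfc_id' ℝ c]
    have hcont1 : ContinuousOn (fun l : ℝ => 1 - l) (spectrum ℝ c) := by fun_prop
    have e8 : cfc (fun l : ℝ => (1 - l) - l * (1 - l) / (l + ε * (1 - l))) c
        = (1 - c) - cfc (fun l : ℝ => l * (1 - l) / (l + ε * (1 - l))) c := by
      rw [cfc_sub (fun l : ℝ => 1 - l) _ c hcont1 hqs, hone]
    have e9 : cfc (fun l : ℝ => (1 - l) - l * (1 - l) / (l + ε * (1 - l))) c * x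
        = (1 - c) * x - cfc (fun l : ℝ => l * (1 - l) / (l + ε * (1 - l))) c * x := by
      rw [e8, sub_mul]
    rw [echain, e9, aux_app_sub ω hs hrep]
    ring
  -- bounds on the error function
  have hdd_eq : ∀ ε : ℝ, 0 < ε → ∀ l ∈ Set.Icc (0:ℝ) 1,
      (1 - l) - l * (1 - l) / (l + ε * (1 - l))
        = ε * (1 - l) ^ 2 / (l + ε * (1 - l)) := by
    intro ε hε l hl
    have h := (hden ε hε l hl).ne'
    rw [eq_div_iff h, sub_mul, div_mul_cancel₀ _ h]
    ring
  have hdd_bound : ∀ ε : ℝ, 0 < ε → ∀ l ∈ Set.Icc (0:ℝ) 1,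
      |(1 - l) - l * (1 - l) / (l + ε * (1 - l))| ≤ 1 := by
    intro ε hε l hl
    rw [hdd_eq ε hε l hl]
    have hd := hden ε hε l hl
    have hnum : 0 ≤ ε * (1 - l) ^ 2 := by positivity
    rw [abs_of_nonneg (div_nonneg hnum hd.le), div_le_one hd]
    nlinarith [hl.1, hl.2]
  have hddl_bound : ∀ ε : ℝ, 0 < ε → ∀ l ∈ Set.Icc (0:ℝ) 1,
      |((1 - l) - l * (1 - l) / (l + ε * (1 - l))) * l| ≤ ε := by
    intro ε hε l hl
    rw [hdd_eq ε hε l hl]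
    have hd := hden ε hε l hl
    have hnum : 0 ≤ ε * (1 - l) ^ 2 / (l + ε * (1 - l)) * l :=
      mul_nonneg (div_nonneg (by positivity) hd.le) hl.1
    rw [abs_of_nonneg hnum, div_mul_eq_mul_div, div_le_iff₀ hd]
    have ha : ε * (1 - l) ^ 2 * l ≤ ε * l := by
      nlinarith [mul_nonneg (mul_nonneg (mul_nonneg hε.le hl.1) hl.1)
        (by linarith [hl.2] : (0:ℝ) ≤ 2 - l)]
    have hb : ε * l ≤ ε * (l + ε * (1 - l)) := by
      nlinarith [mul_nonneg (mul_nonneg hε.le hε.le) (by linarith [hl.2] : (0:ℝ) ≤ 1 - l)]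
    linarith
  have hDnorm : ∀ ε : ℝ, 0 < ε →
      ‖cfc (fun l : ℝ => (1 - l) - l * (1 - l) / (l + ε * (1 - l))) c‖ ≤ 1 := by
    intro ε hε
    refine norm_cfc_le zero_le_one fun l hl => ?_
    rw [Real.norm_eq_abs]
    exact hdd_bound ε hε l (hspec hl)
  have hDc : ∀ ε : ℝ, 0 < ε →
      ‖cfc (fun l : ℝ => (1 - l) - l * (1 - l) / (l + ε * (1 - l))) c * c‖ ≤ ε := by
    intro ε hε
    have hdds : ContinuousOn (fun l : ℝ => (1 - l) - l * (1 - l) / (l + ε * (1 - l)))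
        (spectrum ℝ c) := (hddcont ε hε).mono hspec
    have e : cfc (fun l : ℝ => ((1 - l) - l * (1 - l) / (l + ε * (1 - l))) * l) c
        = cfc (fun l : ℝ => (1 - l) - l * (1 - l) / (l + ε * (1 - l))) c * c := by
      rw [cfc_mul _ (fun l : ℝ => l) c hdds continuous_id.continuousOn, cfc_id' ℝ c]
    rw [← e]
    refine norm_cfc_le hε.le fun l hl => ?_
    rw [Real.norm_eq_abs]
    exact hddl_bound ε hε l (hspec hl)
  -- strong convergence to 0
  have hstrong : ∀ v : H,
      Tendsto (fun ε : ℝ =>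
          ‖cfc (fun l : ℝ => (1 - l) - l * (1 - l) / (l + ε * (1 - l))) c v‖)
        (nhdsWithin 0 (Set.Ioi 0)) (nhds 0) := by
    intro v
    rw [Metric.tendsto_nhds]
    intro δ hδ
    obtain ⟨w, hw⟩ := aux_dense hcsa hcinj v (show (0:ℝ) < δ/2 by positivity)
    have hw1 : (0:ℝ) < ‖w‖ + 1 := by positivity
    have hev : Set.Ioo (0:ℝ) (δ / (2 * (‖w‖ + 1))) ∈ nhdsWithin 0 (Set.Ioi 0) :=
      Ioo_mem_nhdsGT_of_mem ⟨le_refl 0, by positivity⟩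
    filter_upwards [hev] with ε hε
    have hε0 : 0 < ε := hε.1
    have hεlt : ε < δ / (2 * (‖w‖ + 1)) := hε.2
    have hsplit : cfc (fun l : ℝ => (1 - l) - l * (1 - l) / (l + ε * (1 - l))) c v
        = cfc (fun l : ℝ => (1 - l) - l * (1 - l) / (l + ε * (1 - l))) c (v - c w)
          + (cfc (fun l : ℝ => (1 - l) - l * (1 - l) / (l + ε * (1 - l))) c * c) w := by
      rw [ContinuousLinearMap.mul_apply, ← map_add]
      congr 1
      abel
    rw [Real.dist_eq, sub_zero, abs_of_nonneg (norm_nonneg _)]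
    calc ‖cfc (fun l : ℝ => (1 - l) - l * (1 - l) / (l + ε * (1 - l))) c v‖
        ≤ ‖cfc (fun l : ℝ => (1 - l) - l * (1 - l) / (l + ε * (1 - l))) c (v - c w)‖
          + ‖(cfc (fun l : ℝ => (1 - l) - l * (1 - l) / (l + ε * (1 - l))) c * c) w‖ := by
          rw [hsplit]; exact norm_add_le _ _
      _ ≤ ‖cfc (fun l : ℝ => (1 - l) - l * (1 - l) / (l + ε * (1 - l))) c‖ * ‖v - c w‖
          + ‖cfc (fun l : ℝ => (1 - l) - l * (1 - l) / (l + ε * (1 - l))) c * c‖ * ‖w‖ :=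
          add_le_add (ContinuousLinearMap.le_opNorm _ _) (ContinuousLinearMap.le_opNorm _ _)
      _ ≤ 1 * ‖v - c w‖ + ε * ‖w‖ := by
          gcongr
          · exact hDnorm ε hε0
          · exact hDc ε hε0
      _ < δ := by
          have h2 : ε * ‖w‖ ≤ ε * (‖w‖ + 1) :=
            mul_le_mul_of_nonneg_left (by linarith [norm_nonneg w]) hε0.le
          have h3 : ε * (‖w‖ + 1) < δ / (2 * (‖w‖ + 1)) * (‖w‖ + 1) :=
            mul_lt_mul_of_pos_right hεlt hw1
          have h4 : δ / (2 * (‖w‖ + 1)) * (‖w‖ + 1) = δ / 2 := by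
            field_simp
          rw [h4] at h3
          have h5 : ‖v - c w‖ < δ / 2 := hw
          linarith
  -- conclude by dominated convergence
  have hzero : Tendsto
      (fun ε : ℝ => ω.app
        (cfc (fun l : ℝ => (1 - l) - l * (1 - l) / (l + ε * (1 - l))) c * x))
      (nhdsWithin 0 (Set.Ioi 0)) (nhds 0) := by
    have hrw : (fun ε : ℝ => ω.app
        (cfc (fun l : ℝ => (1 - l) - l * (1 - l) / (l + ε * (1 - l))) c * x))
        = fun ε : ℝ => ∑' n, (inner ℂ (ξ n)
            ((cfc (fun l : ℝ => (1 - l) - l * (1 - l) / (l + ε * (1 - l))) c * x)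
              (ξ n)) : ℂ) := by
      funext ε
      exact hrep _
    rw [hrw, show (0:ℂ) = ∑' _ : ℕ, (0:ℂ) from tsum_zero.symm]
    refine tendsto_tsum_of_dominated_convergence
      (bound := fun n => ‖x‖ * ‖ξ n‖ ^ 2) (hs.mul_left ‖x‖) (fun n => ?_) ?_
    · have hb : ∀ ε : ℝ, ‖(inner ℂ (ξ n)
          ((cfc (fun l : ℝ => (1 - l) - l * (1 - l) / (l + ε * (1 - l))) c * x)
            (ξ n)) : ℂ)‖ ≤ ‖ξ n‖ *
          ‖cfc (fun l : ℝ => (1 - l) - l * (1 - l) / (l + ε * (1 - l))) c (x (ξ n))‖ := by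
        intro ε
        calc ‖(inner ℂ (ξ n)
            ((cfc (fun l : ℝ => (1 - l) - l * (1 - l) / (l + ε * (1 - l))) c * x)
              (ξ n)) : ℂ)‖
            ≤ ‖ξ n‖ * ‖(cfc (fun l : ℝ => (1 - l) - l * (1 - l) / (l + ε * (1 - l))) c * x)
              (ξ n)‖ := norm_inner_le_norm _ _
          _ = ‖ξ n‖ * ‖cfc (fun l : ℝ => (1 - l) - l * (1 - l) / (l + ε * (1 - l))) c
              (x (ξ n))‖ := by rw [ContinuousLinearMap.mul_apply]
      exact squeeze_zero_norm hb (by simpa using (hstrong (x (ξ n))).const_mul ‖ξ n‖)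
    · filter_upwards [self_mem_nhdsWithin] with ε hε
      intro n
      have hε0 : (0:ℝ) < ε := hε
      have hn1 : ‖cfc (fun l : ℝ => (1 - l) - l * (1 - l) / (l + ε * (1 - l))) c * x‖
          ≤ 1 * ‖x‖ := by
        calc ‖cfc (fun l : ℝ => (1 - l) - l * (1 - l) / (l + ε * (1 - l))) c * x‖
            ≤ ‖cfc (fun l : ℝ => (1 - l) - l * (1 - l) / (l + ε * (1 - l))) c‖ * ‖x‖ :=
              norm_mul_le _ _
          _ ≤ 1 * ‖x‖ := by gcongr; exact hDnorm ε hε0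
      calc ‖(inner ℂ (ξ n)
          ((cfc (fun l : ℝ => (1 - l) - l * (1 - l) / (l + ε * (1 - l))) c * x)
            (ξ n)) : ℂ)‖
          ≤ ‖ξ n‖ * ‖(cfc (fun l : ℝ => (1 - l) - l * (1 - l) / (l + ε * (1 - l))) c * x)
            (ξ n)‖ := norm_inner_le_norm _ _
        _ ≤ ‖ξ n‖ * (‖cfc (fun l : ℝ => (1 - l) - l * (1 - l) / (l + ε * (1 - l))) c * x‖
            * ‖ξ n‖) := by
            gcongr
            exact ContinuousLinearMap.le_opNorm _ _
        _ ≤ ‖ξ n‖ * ((1 * ‖x‖) * ‖ξ n‖) := by gcongr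
        _ = ‖x‖ * ‖ξ n‖ ^ 2 := by ring
  have hEq : (fun ε : ℝ =>
      ω.app (cfc (fun l : ℝ => Real.sqrt ((1 - l) / (l + ε * (1 - l)))) c *
        (cfc Real.sqrt c * x * cfc Real.sqrt c) *
        cfc (fun l : ℝ => Real.sqrt ((1 - l) / (l + ε * (1 - l)))) c))
      =ᶠ[nhdsWithin 0 (Set.Ioi 0)]
      (fun ε : ℝ => ω.app (((1 : H →L[ℂ] H) - c) * x)
        - ω.app (cfc (fun l : ℝ => (1 - l) - l * (1 - l) / (l + ε * (1 - l))) c * x)) := by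
    filter_upwards [self_mem_nhdsWithin] with ε hε
    exact key ε hε
  rw [tendsto_congr' hEq]
  simpa using tendsto_const_nhds.sub hzero
end
end
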